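/- Let V : (0,T) → ℝ^{n×n} be a C¹ matrix-valued function satisfying V'(t) + V(t)* P(t) V(t) + D(t) = 0, where P(t) is symmetric with y* P(t) y ≥ (1/M)|y|² for all y and |y* D(t) y| < M R² for all unit vectors y, with M, R > 0 and T > 2. Then for every unit vector x and every t with 1 < t < T − 1 one has |x* V(t) x| ≤ M R coth(R). -/

import Mathlib

open Set

/-- key algebraic identity -/
lemma riccati_coth_identity (M R u : ℝ) (hM : M ≠ 0) (hu : Real.sinh u ≠ 0) :
    M * R ^ 2 - (M * R * (Real.cosh u / Real.sinh u)) ^ 2 / M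
      = -(M * R ^ 2 / Real.sinh u ^ 2) := by
  have hsq := Real.cosh_sq u
  field_simp
  linear_combination (-R ^ 2) * hsq

/-- derivative of the comparison function -/
lemma riccati_aux_gderiv (M R b : ℝ) (s : ℝ) (hs : Real.sinh (R * (s - b)) ≠ 0) :
    HasDerivAt (fun s => M * R * (Real.cosh (R * (s - b)) / Real.sinh (R * (s - b))))
      (-(M * R ^ 2 / Real.sinh (R * (s - b)) ^ 2)) s := by
  have hu : HasDerivAt (fun s : ℝ => R * (s - b)) R s := by
    simpa using ((hasDerivAt_id s).sub_const b).const_mul R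
  have hc : HasDerivAt (fun s : ℝ => Real.cosh (R * (s - b)))
      (Real.sinh (R * (s - b)) * R) s := hu.cosh
  have hsn : HasDerivAt (fun s : ℝ => Real.sinh (R * (s - b)))
      (Real.cosh (R * (s - b)) * R) s := hu.sinh
  have hD := (hc.div hsn hs).const_mul (M * R)
  refine hD.congr_deriv ?_
  have hnum : Real.sinh (R * (s - b)) * R * Real.sinh (R * (s - b)) -
      Real.cosh (R * (s - b)) * (Real.cosh (R * (s - b)) * R) = -R := by
    linear_combination (-R) * Real.cosh_sq (R * (s - b))
  rw [hnum]
  ring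

/-- Core comparison lemma: if `f' < M R² - f²/M` on `[a, a+1]`, then
`f a > -(M R coth R)`. -/
lemma riccati_core (M R : ℝ) (hM : 0 < M) (hR : 0 < R) (a : ℝ) (f f' : ℝ → ℝ)
    (hd : ∀ s ∈ Icc a (a + 1), HasDerivAt f (f' s) s)
    (hb : ∀ s ∈ Icc a (a + 1), f' s < M * R ^ 2 - (f s) ^ 2 / M) :
    -(M * R * (Real.cosh R / Real.sinh R)) < f a := by
  by_contra hcon
  push_neg at hcon
  set b := a + 1 with hbdef
  set g : ℝ → ℝ := fun s => M * R * (Real.cosh (R * (s - b)) / Real.sinh (R * (s - b))) with hg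
  have hfc : ContinuousOn f (Icc a b) := fun s hs => (hd s hs).continuousAt.continuousWithinAt
  obtain ⟨c, hc, hmin⟩ := (isCompact_Icc).exists_isMinOn ⟨a, by simp [hbdef]⟩ hfc
  set K : ℝ := 1 + |f c| with hK
  have hKpos : 0 < K := by positivity
  have hcont : Continuous fun ε : ℝ => Real.sinh (R * ε) := by fun_prop
  have h1 : Filter.Tendsto (fun ε : ℝ => Real.sinh (R * ε)) (nhdsWithin 0 (Ioi 0)) (nhds 0) := by
    have := hcont.tendsto 0
    simp only [mul_zero, Real.sinh_zero] at this
    exact this.mono_left nhdsWithin_le_nhds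
  have h2 : ∀ᶠ ε in nhdsWithin (0:ℝ) (Ioi 0), Real.sinh (R * ε) < M * R / K :=
    h1.eventually_lt_const (by positivity)
  have h3 : ∀ᶠ ε in nhdsWithin (0:ℝ) (Ioi 0), ε ∈ Ioo (0:ℝ) 1 :=
    Ioo_mem_nhdsGT_of_mem (by constructor <;> norm_num)
  obtain ⟨ε, hε1, hε0, hε01⟩ := (h2.and h3).exists
  set b' := b - ε with hb'
  have hab' : a < b' := by simp only [hb', hbdef]; linarith
  have hb'b : b' < b := by simp only [hb']; linarith
  have hsinhpos : 0 < Real.sinh (R * ε) := Real.sinh_pos_iff.2 (by positivity)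
  have hgb' : g b' < f c := by
    have h4 : g b' = -(M * R * (Real.cosh (R * ε) / Real.sinh (R * ε))) := by
      simp only [hg, hb']
      rw [show R * (b - ε - b) = -(R * ε) by ring, Real.cosh_neg, Real.sinh_neg, div_neg]
      ring
    have h5 : M * R / Real.sinh (R * ε) ≤ M * R * (Real.cosh (R * ε) / Real.sinh (R * ε)) := by
      have h51 : M * R / Real.sinh (R * ε) = M * R * (1 / Real.sinh (R * ε)) := by ring
      rw [h51]
      gcongr
      exact Real.one_le_cosh _
    have h6 : K < M * R / Real.sinh (R * ε) := by
      rw [lt_div_iff₀ hsinhpos]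
      have := (lt_div_iff₀ hKpos).1 hε1
      linarith [this]
    have h7 : -K < f c := by
      simp only [hK]
      cases abs_cases (f c) with
      | inl h => linarith [h.1]
      | inr h => linarith [h.1]
    linarith [h4, h5, h6, h7, h4 ▸ le_refl (g b')]
  have hsub : Icc a b' ⊆ Icc a b := Icc_subset_Icc le_rfl hb'b.le
  have hsinhne : ∀ s ∈ Icc a b', Real.sinh (R * (s - b)) ≠ 0 := by
    intro s hs
    have hsb : s - b < 0 := by linarith [hs.2]
    exact ne_of_lt (Real.sinh_neg_iff.2 (by nlinarith))
  have hcmp : f b' ≤ g b' := by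
    refine image_le_of_deriv_right_lt_deriv_boundary' (f' := f')
      (B' := fun s => -(M * R ^ 2 / Real.sinh (R * (s - b)) ^ 2))
      (hfc.mono hsub)
      (fun s hs => (hd s (hsub (mem_Icc_of_Ico hs))).hasDerivWithinAt)
      ?_ ?_ ?_ ?_ (right_mem_Icc.2 hab'.le)
    · have hga : g a = -(M * R * (Real.cosh R / Real.sinh R)) := by
        simp only [hg, hbdef]
        rw [show R * (a - (a + 1)) = -R by ring, Real.cosh_neg, Real.sinh_neg, div_neg]
        ring
      rw [hga]; exact hcon
    · intro s hs
      exact ((riccati_aux_gderiv M R b s (hsinhne s hs)).continuousAt).continuousWithinAt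
    · intro s hs
      exact (riccati_aux_gderiv M R b s (hsinhne s (mem_Icc_of_Ico hs))).hasDerivWithinAt
    · intro s hs heq
      have hs' : s ∈ Icc a b := hsub (mem_Icc_of_Ico hs)
      have h7 := hb s hs'
      have hne := hsinhne s (mem_Icc_of_Ico hs)
      have h8 : M * R ^ 2 - (g s) ^ 2 / M = -(M * R ^ 2 / Real.sinh (R * (s - b)) ^ 2) :=
        riccati_coth_identity M R (R * (s - b)) hM.ne' hne
      rw [heq, h8] at h7
      exact h7
  have hcb' : f c ≤ f b' := hmin (hsub (right_mem_Icc.2 hab'.le))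
  linarith

open Matrix

/-- Bound for solutions of the matrix Riccati equation
`V' + Vᵀ P V + D = 0` on `(0,T)`:  if `P` is symmetric with
`yᵀ P y ≥ |y|²/M` and `|yᵀ D y| < M R²` on unit vectors, then
`|xᵀ V(t) x| ≤ M R coth R` for all unit `x` and `1 < t < T - 1`. -/
theorem riccati_quadratic_form_bound
    (n : ℕ) (T M R : ℝ) (hT : 2 < T) (hM : 0 < M) (hR : 0 < R)
    (P D V V' : ℝ → Matrix (Fin n) (Fin n) ℝ)
    (hPcont : ∀ i j, ContinuousOn (fun t => P t i j) (Set.Ioo 0 T))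
    (hDcont : ∀ i j, ContinuousOn (fun t => D t i j) (Set.Ioo 0 T))
    (hPsymm : ∀ t ∈ Set.Ioo (0:ℝ) T, (P t)ᵀ = P t)
    (hPpos : ∀ t ∈ Set.Ioo (0:ℝ) T, ∀ y : Fin n → ℝ,
      y ⬝ᵥ (P t *ᵥ y) ≥ (1 / M) * (y ⬝ᵥ y))
    (hDbd : ∀ t ∈ Set.Ioo (0:ℝ) T, ∀ y : Fin n → ℝ, y ⬝ᵥ y = 1 →
      |y ⬝ᵥ (D t *ᵥ y)| < M * R ^ 2)
    (hV : ∀ t ∈ Set.Ioo (0:ℝ) T, ∀ i j,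
      HasDerivAt (fun s => V s i j) (V' t i j) t)
    (hRic : ∀ t ∈ Set.Ioo (0:ℝ) T,
      V' t + (V t)ᵀ * P t * V t + D t = 0) :
    ∀ x : Fin n → ℝ, x ⬝ᵥ x = 1 → ∀ t ∈ Set.Ioo (1:ℝ) (T - 1),
      |x ⬝ᵥ (V t *ᵥ x)| ≤ M * R * (Real.cosh R / Real.sinh R) := by
  intro x hx t ht
  obtain ⟨ht1, ht2⟩ := ht
  set f : ℝ → ℝ := fun s => x ⬝ᵥ (V s *ᵥ x) with hf
  set f' : ℝ → ℝ := fun s => x ⬝ᵥ (V' s *ᵥ x) with hf'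
  -- the quadratic form is differentiable
  have hderiv : ∀ s ∈ Set.Ioo (0:ℝ) T, HasDerivAt f (f' s) s := by
    intro s hs
    have key : HasDerivAt (fun s => ∑ i, x i * ∑ j, V s i j * x j)
        (∑ i, x i * ∑ j, V' s i j * x j) s :=
      HasDerivAt.fun_sum fun i _ =>
        (HasDerivAt.fun_sum fun j _ => (hV s hs i j).mul_const (x j)).const_mul (x i)
    have e1 : ∀ (W : Matrix (Fin n) (Fin n) ℝ),
        x ⬝ᵥ (W *ᵥ x) = ∑ i, x i * ∑ j, W i j * x j := fun W => rfl
    simp only [hf, hf', e1]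
    exact key
  -- the differential inequality
  have hbound : ∀ s ∈ Set.Ioo (0:ℝ) T, f' s < M * R ^ 2 - (f s) ^ 2 / M := by
    intro s hs
    have hRic' : V' s = -((V s)ᵀ * P s * V s + D s) := by
      have h := hRic s hs
      rw [add_assoc] at h
      exact eq_neg_of_add_eq_zero_left h
    set w := V s *ᵥ x with hw
    have heq : f' s = -(w ⬝ᵥ (P s *ᵥ w)) - x ⬝ᵥ (D s *ᵥ x) := by
      have hquad : x ⬝ᵥ (((V s)ᵀ * P s * V s) *ᵥ x) = w ⬝ᵥ (P s *ᵥ w) := by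
        rw [← Matrix.mulVec_mulVec, ← Matrix.mulVec_mulVec,
          Matrix.dotProduct_mulVec, Matrix.vecMul_transpose]
      simp only [hf', hRic', Matrix.neg_mulVec, Matrix.add_mulVec,
        dotProduct_neg, dotProduct_add, dotProduct_sub, hquad]
      ring
    have hCS : (f s) ^ 2 ≤ w ⬝ᵥ w := by
      have h1 := Finset.sum_mul_sq_le_sq_mul_sq Finset.univ x w
      have hx2 : ∑ i, x i ^ 2 = 1 := by
        have : x ⬝ᵥ x = ∑ i, x i ^ 2 := by simp [dotProduct, sq]
        rw [← this, hx]
      have hfs : f s = ∑ i, x i * w i := rfl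
      have hww : w ⬝ᵥ w = ∑ i, w i ^ 2 := by simp [dotProduct, sq]
      rw [hfs, hww]
      calc (∑ i, x i * w i) ^ 2 ≤ (∑ i, x i ^ 2) * ∑ i, w i ^ 2 := h1
        _ = ∑ i, w i ^ 2 := by rw [hx2, one_mul]
    have hP := hPpos s hs w
    have hDs := hDbd s hs x hx
    have hDs' : -(x ⬝ᵥ (D s *ᵥ x)) < M * R ^ 2 := by
      cases abs_cases (x ⬝ᵥ (D s *ᵥ x)) with
      | inl h => linarith [h.1]
      | inr h => linarith [h.1]
    have hCS' : (1 / M) * (f s) ^ 2 ≤ (1 / M) * (w ⬝ᵥ w) :=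
      mul_le_mul_of_nonneg_left hCS (by positivity)
    have hfM : (f s) ^ 2 / M = (1 / M) * (f s) ^ 2 := by ring
    rw [heq, hfM]
    linarith
  -- lower bound via forward comparison
  have hlow : -(M * R * (Real.cosh R / Real.sinh R)) < f t := by
    apply riccati_core M R hM hR t f f'
    · intro s hs
      exact hderiv s ⟨by linarith [hs.1], by linarith [hs.2]⟩
    · intro s hs
      exact hbound s ⟨by linarith [hs.1], by linarith [hs.2]⟩
  -- upper bound via time reversal
  have hup : f t < M * R * (Real.cosh R / Real.sinh R) := by
    have hcore : -(M * R * (Real.cosh R / Real.sinh R)) < -f (2 * t - t) := by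
      apply riccati_core M R hM hR t (fun s => -f (2 * t - s)) (fun s => f' (2 * t - s))
      · intro s hs
        have hmem : 2 * t - s ∈ Set.Ioo (0:ℝ) T :=
          ⟨by linarith [hs.2], by linarith [hs.1]⟩
        have hinner : HasDerivAt (fun s : ℝ => 2 * t - s) (-1) s := by
          simpa using (hasDerivAt_id s).const_sub (2 * t)
        have := ((hderiv (2 * t - s) hmem).comp s hinner).neg
        exact this.congr_deriv (by ring)
      · intro s hs
        have hmem : 2 * t - s ∈ Set.Ioo (0:ℝ) T :=
          ⟨by linarith [hs.2], by linarith [hs.1]⟩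
        have := hbound (2 * t - s) hmem
        have hsq : (-f (2 * t - s)) ^ 2 = (f (2 * t - s)) ^ 2 := by ring
        rw [hsq]
        exact this
    simp only [show 2 * t - t = t by ring] at hcore
    linarith
  exact abs_le.2 ⟨hlow.le, hup.le⟩
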